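/- Let φ : ℝ → (0,∞) be differentiable with φ(x) ∼ K x e^{-x} as x → ∞ for some K > 0, and suppose ρ(x) := φ(x) + φ'(x) satisfies ρ'(x) = −ρ(x) + g(φ(x)) on ℝ, where g ≥ 0 is continuous with ∫_0^{φ(0)} e^{φ^{-1}(s)} g(s)/s ds < ∞ (φ being eventually decreasing with inverse φ^{-1} near 0, and e^{φ^{-1}(s)} ∼ (log(1/s))/s as s → 0). Then ρ(x) ∼ K e^{-x} as x → ∞. -/

import Mathlib

open Real MeasureTheory Filter Topology

/-- Let `φ : ℝ → (0,∞)` be differentiable with `φ(x) ∼ K x e^{-x}` as `x → ∞` for some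
`K > 0`, and suppose `ρ := φ + φ'` satisfies `ρ' = −ρ + g(φ)` on `ℝ`, where `g ≥ 0` is
continuous with `∫_0^{φ(0)} e^{φ⁻¹(s)} g(s)/s ds < ∞` (`φ` being eventually decreasing with
inverse `φ⁻¹` near `0`, and `e^{φ⁻¹(s)} ∼ log(1/s)/s` as `s → 0+`).  Then
`ρ(x) ∼ K e^{-x}` as `x → ∞`. -/
theorem rho_asymptotic (φ g : ℝ → ℝ) (K : ℝ) (hK : 0 < K)
    (hφpos : ∀ x, 0 < φ x)
    (hφdiff : Differentiable ℝ φ)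
    (hφasymp : Tendsto (fun x => φ x / (K * x * Real.exp (-x))) atTop (𝓝 1))
    (hgcont : Continuous g) (hgnonneg : ∀ s, 0 ≤ g s)
    (hρ : ∀ x, HasDerivAt (fun y => φ y + deriv φ y) (-(φ x + deriv φ x) + g (φ x)) x)
    (φinv : ℝ → ℝ) (x₀ : ℝ)
    (hanti : StrictAntiOn φ (Set.Ici x₀))
    (hinv : ∀ x ∈ Set.Ici x₀, φinv (φ x) = x)
    (hinvasymp : Tendsto (fun s => Real.exp (φinv s) * s / Real.log (1 / s))
      (𝓝[>] (0 : ℝ)) (𝓝 1))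
    (hintegrable : IntegrableOn (fun s => Real.exp (φinv s) * g s / s) (Set.Ioo 0 (φ 0))) :
    Tendsto (fun x => (φ x + deriv φ x) / (K * Real.exp (-x))) atTop (𝓝 1) := by
  set f : ℝ → ℝ := fun x => Real.exp x * (φ x + deriv φ x) with hf_def
  set F : ℝ → ℝ := fun x => Real.exp x * φ x with hF_def
  set A : ℝ → ℝ := fun x => φ x / (K * x * Real.exp (-x)) with hA_def
  -- F' = f
  have hF : ∀ x, HasDerivAt F (f x) x := by
    intro x
    have h1 : HasDerivAt (fun y => Real.exp y * φ y) (Real.exp x * φ x + Real.exp x * deriv φ x) x := (Real.hasDerivAt_exp x).mul (hφdiff x).hasDerivAt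
    convert h1 using 1
    simp [hf_def]; ring
  -- f' = exp * (g ∘ φ) ≥ 0
  have hf : ∀ x, HasDerivAt f (Real.exp x * g (φ x)) x := by
    intro x
    have h1 : HasDerivAt (fun y => Real.exp y * (φ y + deriv φ y)) (Real.exp x * (φ x + deriv φ x) + Real.exp x * (-(φ x + deriv φ x) + g (φ x))) x := (Real.hasDerivAt_exp x).mul (hρ x)
    convert h1 using 1
    ring
  have hmono : Monotone f := by
    apply monotone_of_deriv_nonneg (fun x => (hf x).differentiableAt)
    intro x
    rw [(hf x).deriv]
    exact mul_nonneg (Real.exp_pos x).le (hgnonneg _)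
  have hFcont : Continuous F := Real.continuous_exp.mul hφdiff.continuous
  -- slope bounds via MVT
  have hupper : ∀ x : ℝ, 0 < x → f x ≤ (F (2 * x) - F x) / x := by
    intro x hx
    obtain ⟨c, hc, hceq⟩ := exists_hasDerivAt_eq_slope F f (by linarith : x < 2 * x)
      hFcont.continuousOn (fun y _ => hF y)
    have h2 : f x ≤ f c := hmono hc.1.le
    have : (2 : ℝ) * x - x = x := by ring
    rw [this] at hceq
    linarith [hceq ▸ h2]
  have hlower : ∀ x : ℝ, 0 < x → (F x - F (x / 2)) / (x / 2) ≤ f x := by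
    intro x hx
    obtain ⟨c, hc, hceq⟩ := exists_hasDerivAt_eq_slope F f (by linarith : x / 2 < x)
      hFcont.continuousOn (fun y _ => hF y)
    have h2 : f c ≤ f x := hmono hc.2.le
    have : x - x / 2 = x / 2 := by ring
    rw [this] at hceq
    linarith [hceq ▸ h2]
  -- limits of the slope bounds
  have hA : Tendsto A atTop (𝓝 1) := hφasymp
  have h2x : Tendsto (fun x : ℝ => 2 * x) atTop atTop :=
    tendsto_id.const_mul_atTop two_pos
  have hhalf : Tendsto (fun x : ℝ => x / 2) atTop atTop :=
    tendsto_id.atTop_div_const two_pos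
  have hU : Tendsto (fun x => (F (2 * x) - F x) / x) atTop (𝓝 K) := by
    have h1 : Tendsto (fun x => 2 * K * A (2 * x) - K * A x) atTop
        (𝓝 (2 * K * 1 - K * 1)) :=
      ((hA.comp h2x).const_mul _).sub (hA.const_mul K)
    have h2 : (2 : ℝ) * K * 1 - K * 1 = K := by ring
    rw [h2] at h1
    apply h1.congr'
    filter_upwards [eventually_gt_atTop (0 : ℝ)] with x hx
    have hx0 : x ≠ 0 := ne_of_gt hx
    simp only [hA_def, hF_def, Real.exp_neg]
    field_simp
  have hL : Tendsto (fun x => (F x - F (x / 2)) / (x / 2)) atTop (𝓝 K) := by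
    have h1 : Tendsto (fun x => 2 * K * A x - K * A (x / 2)) atTop
        (𝓝 (2 * K * 1 - K * 1)) :=
      (hA.const_mul _).sub ((hA.comp hhalf).const_mul K)
    have h2 : (2 : ℝ) * K * 1 - K * 1 = K := by ring
    rw [h2] at h1
    apply h1.congr'
    filter_upwards [eventually_gt_atTop (0 : ℝ)] with x hx
    have hx0 : x ≠ 0 := ne_of_gt hx
    simp only [hA_def, hF_def, Real.exp_neg]
    field_simp
  -- squeeze
  have hfK : Tendsto f atTop (𝓝 K) := by
    apply tendsto_of_tendsto_of_tendsto_of_le_of_le' hL hU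
    · filter_upwards [eventually_gt_atTop (0 : ℝ)] with x hx using hlower x hx
    · filter_upwards [eventually_gt_atTop (0 : ℝ)] with x hx using hupper x hx
  have hdiv : Tendsto (fun x => f x / K) atTop (𝓝 (K / K)) := hfK.div_const K
  rw [div_self (ne_of_gt hK)] at hdiv
  apply hdiv.congr
  intro x
  simp only [hf_def, Real.exp_neg]
  field_simp
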